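/- In addition to the hypotheses of the noisy recursion (independent mean-zero noises ε_n ∈ L² driving f_n := f_{n−1} + λ_n (⟨k_n, f*⟩ + ε_n − ⟨k_n, f_{n−1}⟩) k_n/‖k_n‖², f_0 = 0, e_n := f* − f_n, 0 < λ_n < 2), assume there are constants κ > 0 and σ ≥ 0 such that ‖k_n‖² ≥ κ and 𝔼|ε_n|² ≤ σ² for all n ≥ 1. Then for every N ≥ 1, 𝔼‖e_N‖² ≤ ‖f*‖² + (σ²/κ) ∑_{n=1}^N λ_n². In particular, if ∑_{n=1}^∞ λ_n² < ∞, then sup_{N≥1} 𝔼‖e_N‖² < ∞. -/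

import Mathlib

open MeasureTheory

private lemma kacz_contract {H : Type*} [NormedAddCommGroup H] [InnerProductSpace ℂ H]
    (kv : H) (hkv : kv ≠ 0) (l : ℝ) (h0 : 0 < l) (h2 : l < 2) (x : H) :
    ‖x - (((l:ℂ) * inner ℂ kv x) / ((‖kv‖:ℂ)^2)) • kv‖ ^ 2 ≤ ‖x‖ ^ 2 := by
  have hr : (0:ℝ) < ‖kv‖ ^ 2 := pow_pos (norm_pos_iff.mpr hkv) 2
  set t : ℂ := inner ℂ kv x with ht
  set c : ℂ := ((l:ℂ) * t) / ((‖kv‖:ℂ)^2) with hc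
  have hs : (0:ℝ) ≤ Complex.normSq t := Complex.normSq_nonneg t
  have hexp : ‖x - c • kv‖^2 = ‖x‖^2 - 2 * RCLike.re (inner ℂ x (c • kv) : ℂ) + ‖c • kv‖^2 :=
    norm_sub_sq (𝕜 := ℂ) x (c • kv)
  have h1 : (inner ℂ x (c • kv) : ℂ) = (((l / ‖kv‖^2) * Complex.normSq t : ℝ) : ℂ) := by
    rw [inner_smul_right, ← inner_conj_symm, ← ht, hc]
    have : (l:ℂ) * t / (‖kv‖:ℂ)^2 * (starRingEnd ℂ) t
        = (l:ℂ) / (‖kv‖:ℂ)^2 * (t * (starRingEnd ℂ) t) := by ring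
    rw [this, Complex.mul_conj]
    push_cast
    ring
  have h2' : ‖c • kv‖^2 = l^2 * Complex.normSq t / ‖kv‖^2 := by
    rw [norm_smul]
    have habs : ‖c‖^2 = Complex.normSq c := Complex.sq_norm c
    have : Complex.normSq c = l^2 * Complex.normSq t / (‖kv‖^2)^2 := by
      rw [hc, Complex.normSq_div, Complex.normSq_mul]
      simp [Complex.normSq_ofReal]
      ring
    rw [mul_pow, habs, this]
    field_simp
  have hre : RCLike.re (inner ℂ x (c • kv) : ℂ) = (l / ‖kv‖^2) * Complex.normSq t := by
    rw [h1]; exact Complex.ofReal_re _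
  rw [hexp, hre, h2']
  have h2l : (0:ℝ) ≤ 2 - l := by linarith
  have key : 0 ≤ l * (2 - l) * Complex.normSq t / ‖kv‖^2 := by positivity
  have : ‖x‖ ^ 2 - 2 * (l / ‖kv‖ ^ 2 * Complex.normSq t) + l ^ 2 * Complex.normSq t / ‖kv‖ ^ 2
      = ‖x‖^2 - l * (2 - l) * Complex.normSq t / ‖kv‖^2 := by field_simp; ring
  rw [this]
  linarith

private lemma cross_zero {Ω : Type*} [MeasurableSpace Ω] (ℙ : Measure Ω) [IsProbabilityMeasure ℙ]
    (A B : Ω → ℂ) (hind : ProbabilityTheory.IndepFun A B ℙ)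
    (hA : MemLp A 2 ℙ) (hB : MemLp B 2 ℙ) (hAmean : ∫ ω, A ω ∂ℙ = 0) :
    ∫ ω, (A ω * B ω).re ∂ℙ = 0 := by
  have hAi : Integrable A ℙ := hA.integrable one_le_two
  have hBi : Integrable B ℙ := hB.integrable one_le_two
  have hAre : Integrable (fun ω => (A ω).re) ℙ := by
    have := (hA.re.integrable one_le_two); simpa using this
  have hAim : Integrable (fun ω => (A ω).im) ℙ := by
    have := (hA.im.integrable one_le_two); simpa using this
  have hBre : Integrable (fun ω => (B ω).re) ℙ := by
    have := (hB.re.integrable one_le_two); simpa using this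
  have hBim : Integrable (fun ω => (B ω).im) ℙ := by
    have := (hB.im.integrable one_le_two); simpa using this
  have hire : ProbabilityTheory.IndepFun (fun ω => (A ω).re) (fun ω => (B ω).re) ℙ :=
    hind.comp Complex.measurable_re Complex.measurable_re
  have hiim : ProbabilityTheory.IndepFun (fun ω => (A ω).im) (fun ω => (B ω).im) ℙ :=
    hind.comp Complex.measurable_im Complex.measurable_im
  have hpr1 : Integrable (fun ω => (A ω).re * (B ω).re) ℙ := by
    have := hire.integrable_mul hAre hBre
    simpa [Pi.mul_def] using this
  have hpr2 : Integrable (fun ω => (A ω).im * (B ω).im) ℙ := by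
    have := hiim.integrable_mul hAim hBim
    simpa [Pi.mul_def] using this
  have hAre0 : ∫ ω, (A ω).re ∂ℙ = 0 := by
    have := integral_re hAi; rw [hAmean] at this; simpa using this
  have hAim0 : ∫ ω, (A ω).im ∂ℙ = 0 := by
    have := integral_im hAi; rw [hAmean] at this; simpa using this
  have h1 : ∫ ω, (A ω).re * (B ω).re ∂ℙ
      = (∫ ω, (A ω).re ∂ℙ) * ∫ ω, (B ω).re ∂ℙ :=
    hire.integral_mul_eq_mul_integral hAre.1 hBre.1
  have h2 : ∫ ω, (A ω).im * (B ω).im ∂ℙ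
      = (∫ ω, (A ω).im ∂ℙ) * ∫ ω, (B ω).im ∂ℙ :=
    hiim.integral_mul_eq_mul_integral hAim.1 hBim.1
  have heq : (fun ω => (A ω * B ω).re) = fun ω => (A ω).re * (B ω).re - (A ω).im * (B ω).im := by
    funext ω; exact Complex.mul_re _ _
  rw [heq, integral_sub hpr1 hpr2, h1, h2, hAre0, hAim0]
  ring

private lemma step_bound {H : Type*} [NormedAddCommGroup H] [InnerProductSpace ℂ H]
    {Ω : Type*} [MeasurableSpace Ω] (ℙ : Measure Ω) [IsProbabilityMeasure ℙ]
    (kv : H) (hkv : kv ≠ 0) (l : ℝ) (h0 : 0 < l) (h2 : l < 2)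
    (εf : Ω → ℂ) (hεL2 : MemLp εf 2 ℙ) (hεmean : ∫ ω, εf ω ∂ℙ = 0)
    (E E' : Ω → H) (hE2 : MemLp E 2 ℙ) (hE'2 : MemLp E' 2 ℙ)
    (hrec : ∀ ω, E' ω = E ω - (((l:ℂ) * ((inner ℂ kv (E ω) : ℂ) + εf ω)) / ((‖kv‖:ℂ)^2)) • kv)
    (hind : ProbabilityTheory.IndepFun (fun ω => (inner ℂ kv (E ω) : ℂ)) εf ℙ)
    (κ : ℝ) (hκ : 0 < κ) (hkκ : κ ≤ ‖kv‖^2)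
    (σ : ℝ) (hεσ : ∫ ω, ‖εf ω‖^2 ∂ℙ ≤ σ^2) :
    ∫ ω, ‖E' ω‖^2 ∂ℙ ≤ (∫ ω, ‖E ω‖^2 ∂ℙ) + σ^2/κ * l^2 := by
  have hr : (0:ℝ) < ‖kv‖ ^ 2 := pow_pos (norm_pos_iff.mpr hkv) 2
  have hrC : ((‖kv‖:ℂ)^2) ≠ 0 :=
    pow_ne_zero 2 (Complex.ofReal_ne_zero.mpr (norm_ne_zero_iff.mpr hkv))
  set Aa : Ω → H := fun ω => E ω - (((l:ℂ) * (inner ℂ kv (E ω) : ℂ)) / ((‖kv‖:ℂ)^2)) • kv with hAa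
  set Bb : Ω → H := fun ω => (((l:ℂ) * εf ω) / ((‖kv‖:ℂ)^2)) • kv with hBb
  set X : Ω → ℂ := fun ω => ((1:ℂ) - (l:ℂ)) * (starRingEnd ℂ) (inner ℂ kv (E ω)) with hX
  -- split of the recursion
  have hsplit : ∀ ω, E' ω = Aa ω - Bb ω := by
    intro ω
    rw [hrec ω, hAa, hBb]
    have hco : ((l:ℂ) * ((inner ℂ kv (E ω) : ℂ) + εf ω)) / ((‖kv‖:ℂ)^2)
        = ((l:ℂ) * (inner ℂ kv (E ω) : ℂ)) / ((‖kv‖:ℂ)^2) + ((l:ℂ) * εf ω) / ((‖kv‖:ℂ)^2) := by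
      ring
    rw [hco, add_smul]
    module
  -- inner ℂ product of Aa with kv
  have hXa : ∀ ω, (inner ℂ (Aa ω) kv : ℂ) = X ω := by
    intro ω
    rw [hAa, hX]
    rw [inner_sub_left, inner_smul_left, inner_self_eq_norm_sq_to_K, ← inner_conj_symm]
    rw [map_div₀, map_mul]
    simp only [Complex.conj_ofReal, map_pow]
    have hpow : ((‖kv‖:ℂ))^2 = ((‖kv‖^2 : ℝ) : ℂ) := by push_cast; ring
    have hn : (‖kv‖:ℂ) ≠ 0 := Complex.ofReal_ne_zero.mpr (norm_ne_zero_iff.mpr hkv)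
    field_simp
    simp only [RCLike.ofReal_eq_complex_ofReal]
    ring
  -- pointwise inequality
  have hpt : ∀ ω, ‖E' ω‖^2
      ≤ ‖E ω‖^2 + (l^2/κ) * ‖εf ω‖^2 + (-(2 * (l / ‖kv‖^2))) * (εf ω * X ω).re := by
    intro ω
    have h1 : ‖E' ω‖^2 = ‖Aa ω‖^2 - 2 * RCLike.re (inner ℂ (Aa ω) (Bb ω) : ℂ) + ‖Bb ω‖^2 := by
      rw [hsplit ω]; exact norm_sub_sq (𝕜 := ℂ) _ _
    have h2 : ‖Aa ω‖^2 ≤ ‖E ω‖^2 := kacz_contract kv hkv l h0 h2 (E ω)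
    have h3 : (inner ℂ (Aa ω) (Bb ω) : ℂ) = (((l / ‖kv‖^2 : ℝ)):ℂ) * (εf ω * X ω) := by
      rw [hBb]
      rw [inner_smul_right, hXa ω]
      push_cast
      field_simp
    have h4 : RCLike.re (inner ℂ (Aa ω) (Bb ω) : ℂ) = (l / ‖kv‖^2) * (εf ω * X ω).re := by
      rw [h3]; exact Complex.re_ofReal_mul _ _
    have h5 : ‖Bb ω‖^2 = l^2 * ‖εf ω‖^2 / ‖kv‖^2 := by
      rw [hBb, norm_smul, norm_div, norm_mul]
      have hb1 : ‖((l:ℂ))‖ = l := by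
        rw [Complex.norm_real, Real.norm_eq_abs, abs_of_pos h0]
      have hb2 : ‖((‖kv‖:ℂ))^2‖ = ‖kv‖^2 := by
        rw [norm_pow, Complex.norm_real, Real.norm_eq_abs, abs_norm]
      rw [hb1, hb2, mul_pow, div_pow, mul_pow]
      field_simp
    have h6 : ‖Bb ω‖^2 ≤ l^2/κ * ‖εf ω‖^2 := by
      rw [h5]
      have := div_le_div_of_nonneg_left (by positivity : (0:ℝ) ≤ l^2 * ‖εf ω‖^2) hκ hkκ
      calc l^2 * ‖εf ω‖^2 / ‖kv‖^2 ≤ l^2 * ‖εf ω‖^2 / κ := this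
      _ = l^2/κ * ‖εf ω‖^2 := by ring
    rw [h1, h4]
    linarith
  -- integrability
  have hIE' : Integrable (fun ω => ‖E' ω‖^2) ℙ :=
    (memLp_two_iff_integrable_sq_norm hE'2.1).mp hE'2
  have hIE : Integrable (fun ω => ‖E ω‖^2) ℙ :=
    (memLp_two_iff_integrable_sq_norm hE2.1).mp hE2
  have hIε : Integrable (fun ω => ‖εf ω‖^2) ℙ :=
    (memLp_two_iff_integrable_sq_norm hεL2.1).mp hεL2
  have hT2 : MemLp (fun ω => (inner ℂ kv (E ω) : ℂ)) 2 ℙ := hE2.const_inner kv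
  have hX2 : MemLp X 2 ℙ := by
    refine MemLp.of_le_mul (c := ‖((1:ℂ) - (l:ℂ))‖) hT2
      ((RCLike.continuous_conj.comp_aestronglyMeasurable hT2.1).const_mul _)
      (Filter.Eventually.of_forall fun ω => ?_)
    rw [hX]
    simp only [norm_mul, RCLike.norm_conj]
    exact le_rfl
  have hXind : ProbabilityTheory.IndepFun εf X ℙ := by
    have hg : Measurable fun z : ℂ => ((1:ℂ) - (l:ℂ)) * (starRingEnd ℂ) z :=
      ((RCLike.continuous_conj (K := ℂ)).measurable).const_mul _
    exact (hind.comp hg measurable_id).symm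
  have hcross : ∫ ω, (εf ω * X ω).re ∂ℙ = 0 :=
    cross_zero ℙ εf X hXind hεL2 hX2 hεmean
  have hIr : Integrable (fun ω => (εf ω * X ω).re) ℙ := by
    have heq : (fun ω => (εf ω * X ω).re)
        = fun ω => (εf ω).re * (X ω).re - (εf ω).im * (X ω).im := by
      funext ω; exact Complex.mul_re _ _
    rw [heq]
    have hεre : Integrable (fun ω => (εf ω).re) ℙ := by
      have := (hεL2.re.integrable one_le_two); simpa using this
    have hεim : Integrable (fun ω => (εf ω).im) ℙ := by
      have := (hεL2.im.integrable one_le_two); simpa using this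
    have hXre : Integrable (fun ω => (X ω).re) ℙ := by
      have := (hX2.re.integrable one_le_two); simpa using this
    have hXim : Integrable (fun ω => (X ω).im) ℙ := by
      have := (hX2.im.integrable one_le_two); simpa using this
    have h1 : Integrable (fun ω => (εf ω).re * (X ω).re) ℙ := by
      have := (hXind.comp Complex.measurable_re Complex.measurable_re).integrable_mul hεre hXre
      simpa [Pi.mul_def] using this
    have h2' : Integrable (fun ω => (εf ω).im * (X ω).im) ℙ := by
      have := (hXind.comp Complex.measurable_im Complex.measurable_im).integrable_mul hεim hXim
      simpa [Pi.mul_def] using this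
    exact h1.sub h2'
  have hRHS : Integrable (fun ω => ‖E ω‖^2 + (l^2/κ) * ‖εf ω‖^2
      + (-(2 * (l / ‖kv‖^2))) * (εf ω * X ω).re) ℙ :=
    (hIE.add (hIε.const_mul _)).add (hIr.const_mul _)
  have hI12 : Integrable (fun ω => ‖E ω‖^2 + (l^2/κ) * ‖εf ω‖^2) ℙ := hIE.add (hIε.const_mul _)
  have hI3 : Integrable (fun ω => (-(2 * (l / ‖kv‖^2))) * (εf ω * X ω).re) ℙ := hIr.const_mul _
  have hIε' : Integrable (fun ω => (l^2/κ) * ‖εf ω‖^2) ℙ := hIε.const_mul _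
  have hmono := integral_mono hIE' hRHS hpt
  rw [integral_add hI12 hI3, integral_add hIE hIε', integral_const_mul, integral_const_mul, hcross,
      mul_zero, add_zero] at hmono
  have hlast : l^2/κ * ∫ ω, ‖εf ω‖^2 ∂ℙ ≤ l^2/κ * σ^2 :=
    mul_le_mul_of_nonneg_left hεσ (by positivity)
  calc ∫ ω, ‖E' ω‖^2 ∂ℙ ≤ (∫ ω, ‖E ω‖^2 ∂ℙ) + l^2/κ * ∫ ω, ‖εf ω‖^2 ∂ℙ := hmono
  _ ≤ (∫ ω, ‖E ω‖^2 ∂ℙ) + l^2/κ * σ^2 := by linarith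
  _ = (∫ ω, ‖E ω‖^2 ∂ℙ) + σ^2/κ * l^2 := by ring

/-- **A priori bound on the expected error under noise (Corollary 3.4).**
Under the hypotheses of the noisy Kaczmarz recursion, if moreover `‖kₙ‖² ≥ κ > 0`
and `𝔼|εₙ|² ≤ σ²` for all `n`, then `𝔼‖e_N‖² ≤ ‖f*‖² + (σ²/κ) ∑_{n=1}^N λₙ²`;
in particular, if `∑ λₙ² < ∞` then `sup_N 𝔼‖e_N‖² < ∞`. -/
theorem noisy_kaczmarz_expected_error_bound
    {H : Type*} [NormedAddCommGroup H] [InnerProductSpace ℂ H] [CompleteSpace H]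
    {Ω : Type*} [MeasurableSpace Ω] (ℙ : Measure Ω) [IsProbabilityMeasure ℙ]
    (k : ℕ → H) (hk : ∀ n, k n ≠ 0)
    (lam : ℕ → ℝ) (hlam0 : ∀ n, 0 < lam n) (hlam2 : ∀ n, lam n < 2)
    (ε : ℕ → Ω → ℂ) (hmeas : ∀ n, Measurable (ε n))
    (hL2 : ∀ n, MemLp (ε n) 2 ℙ)
    (hmean : ∀ n, ∫ ω, ε n ω ∂ℙ = 0)
    (hindep : ProbabilityTheory.iIndepFun ε ℙ)
    (fstar : H) (y : ℕ → Ω → ℂ) (hy : ∀ n ω, y n ω = inner ℂ (k n) fstar + ε n ω)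
    (f : ℕ → Ω → H) (hf0 : ∀ ω, f 0 ω = 0)
    (hfrec : ∀ n ω, f (n + 1) ω = f n ω
      + (((lam n : ℂ) * (y n ω - inner ℂ (k n) (f n ω)) / ((‖k n‖ : ℂ) ^ 2)) • k n))
    (e : ℕ → Ω → H) (he : ∀ n ω, e n ω = fstar - f n ω)
    (κ : ℝ) (hκ : 0 < κ) (hkκ : ∀ n, κ ≤ ‖k n‖ ^ 2)
    (σ : ℝ) (hσ : 0 ≤ σ) (hεσ : ∀ n, ∫ ω, ‖ε n ω‖ ^ 2 ∂ℙ ≤ σ ^ 2) :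
    (∀ N : ℕ, 1 ≤ N →
      ∫ ω, ‖e N ω‖ ^ 2 ∂ℙ
        ≤ ‖fstar‖ ^ 2 + σ ^ 2 / κ * ∑ n ∈ Finset.range N, (lam n) ^ 2)
    ∧ ((Summable fun n => (lam n) ^ 2) →
        BddAbove (Set.range fun N : ℕ => ∫ ω, ‖e N ω‖ ^ 2 ∂ℙ)) := by
  classical
  have he0 : e 0 = fun _ => fstar := funext fun ω => by rw [he, hf0, sub_zero]
  -- the error recursion
  have hrec : ∀ n ω, e (n + 1) ω
      = e n ω - (((lam n : ℂ) * ((inner ℂ (k n) (e n ω) : ℂ) + ε n ω)) / ((‖k n‖:ℂ)^2)) • k n := by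
    intro n ω
    have hco : (lam n : ℂ) * (y n ω - inner ℂ (k n) (f n ω)) / ((‖k n‖:ℂ)^2)
        = ((lam n : ℂ) * ((inner ℂ (k n) (e n ω) : ℂ) + ε n ω)) / ((‖k n‖:ℂ)^2) := by
      rw [hy, he, inner_sub_right]; ring
    rw [he, hfrec, hco, he, sub_add_eq_sub_sub]
  -- factorization of e n through the first n noises
  have hfac : ∀ n, ∃ F : (Fin n → ℂ) → H, StronglyMeasurable F
      ∧ ∀ ω, e n ω = F (fun i => ε i ω) := by
    intro n
    induction n with
    | zero => exact ⟨fun _ => fstar, stronglyMeasurable_const, fun ω => by rw [he0]⟩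
    | succ n ih =>
      obtain ⟨F, hF, hFe⟩ := ih
      refine ⟨fun v => F (fun i => v i.castSucc)
        - (((lam n : ℂ) * ((inner ℂ (k n) (F (fun i => v i.castSucc)) : ℂ) + v (Fin.last n)))
            / ((‖k n‖:ℂ)^2)) • k n, ?_, ?_⟩
      · have hG : StronglyMeasurable fun v : Fin (n+1) → ℂ => F (fun i => v i.castSucc) :=
          hF.comp_measurable (measurable_pi_lambda _ fun i => measurable_pi_apply _)
        have hinner : Measurable fun v : Fin (n+1) → ℂ =>
            (inner ℂ (k n) (F (fun i => v i.castSucc)) : ℂ) :=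
          ((innerSL ℂ (k n)).continuous.comp_stronglyMeasurable hG).measurable
        have hlast : Measurable fun v : Fin (n+1) → ℂ => v (Fin.last n) :=
          measurable_pi_apply _
        have hsc : Measurable fun v : Fin (n+1) → ℂ =>
            ((lam n : ℂ) * ((inner ℂ (k n) (F (fun i => v i.castSucc)) : ℂ) + v (Fin.last n)))
              / ((‖k n‖:ℂ)^2) :=
          ((hinner.add hlast).const_mul _).div_const _
        exact hG.sub (hsc.stronglyMeasurable.smul_const _)
      · intro ω
        have h1 : (fun i : Fin n => (fun j : Fin (n+1) => ε j ω) i.castSucc)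
            = fun i : Fin n => ε i ω := by
          funext i; simp
        rw [hrec n ω, hFe ω]
        simp only [h1, Fin.val_last]
  -- strong measurability of e n
  have hsm : ∀ n, StronglyMeasurable (e n) := by
    intro n
    obtain ⟨F, hF, hFe⟩ := hfac n
    have heq : e n = fun ω => F (fun i : Fin n => ε i ω) := funext hFe
    rw [heq]
    exact hF.comp_measurable (measurable_pi_lambda _ fun i => hmeas i)
  -- MemLp of e n
  have hm2 : ∀ n, MemLp (e n) 2 ℙ := by
    intro n
    induction n with
    | zero => rw [he0]; exact memLp_const _
    | succ n ih =>
      have hc : MemLp (fun ω =>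
          ((lam n : ℂ) * ((inner ℂ (k n) (e n ω) : ℂ) + ε n ω)) / ((‖k n‖:ℂ)^2)) 2 ℙ := by
        have h1 : MemLp (fun ω => (inner ℂ (k n) (e n ω) : ℂ) + ε n ω) 2 ℙ :=
          (ih.const_inner (𝕜 := ℂ) (k n)).add (hL2 n)
        have h2 := h1.const_mul ((lam n : ℂ))
        refine MemLp.of_le_mul (c := ‖((‖k n‖:ℂ)^2)‖⁻¹) h2 ?_ ?_
        · refine Measurable.aestronglyMeasurable ?_
          exact ((((innerSL ℂ (k n)).continuous.comp_stronglyMeasurable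
            (hsm n)).measurable.add (hmeas n)).const_mul _).div_const _
        · refine Filter.Eventually.of_forall fun ω => ?_
          rw [norm_div, div_eq_inv_mul]
      have hsmul : MemLp (fun ω =>
          (((lam n : ℂ) * ((inner ℂ (k n) (e n ω) : ℂ) + ε n ω)) / ((‖k n‖:ℂ)^2)) • k n) 2 ℙ := by
        refine MemLp.of_le_mul (c := ‖k n‖) hc ?_ ?_
        · exact hc.1.smul_const _
        · refine Filter.Eventually.of_forall fun ω => ?_
          rw [norm_smul, mul_comm]
      have heq : e (n+1) = fun ω => e n ω
          - (((lam n : ℂ) * ((inner ℂ (k n) (e n ω) : ℂ) + ε n ω)) / ((‖k n‖:ℂ)^2)) • k n :=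
        funext (hrec n)
      rw [heq]
      exact ih.sub hsmul
  -- independence of ⟪k n, e n⟫ and ε n
  have hindE : ∀ n, ProbabilityTheory.IndepFun (fun ω => (inner ℂ (k n) (e n ω) : ℂ)) (ε n) ℙ := by
    intro n
    obtain ⟨F, hF, hFe⟩ := hfac n
    have h1 := hindep.indepFun_finset (Finset.range n) {n}
      (Finset.disjoint_singleton_right.mpr (by simp)) hmeas
    have hφ : Measurable fun v : (↥(Finset.range n) → ℂ) =>
        (inner ℂ (k n) (F (fun i : Fin n => v ⟨(i:ℕ), Finset.mem_range.mpr i.isLt⟩)) : ℂ) := by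
      have hin : Measurable fun w : Fin n → ℂ => (inner ℂ (k n) (F w) : ℂ) :=
        ((innerSL ℂ (k n)).continuous.comp_stronglyMeasurable hF).measurable
      exact hin.comp (measurable_pi_lambda _ fun i => measurable_pi_apply _)
    have hψ : Measurable fun v : (↥({n} : Finset ℕ) → ℂ) =>
        v ⟨n, Finset.mem_singleton_self n⟩ := measurable_pi_apply _
    have h2 := h1.comp hφ hψ
    have hXeq : (fun ω => (inner ℂ (k n) (e n ω) : ℂ))
        = (fun v : (↥(Finset.range n) → ℂ) =>
            (inner ℂ (k n) (F (fun i : Fin n => v ⟨(i:ℕ), Finset.mem_range.mpr i.isLt⟩)) : ℂ))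
          ∘ (fun ω (i : ↥(Finset.range n)) => ε (i:ℕ) ω) := by
      funext ω
      simp only [Function.comp_apply]
      rw [hFe ω]
    have hεeq : ε n = (fun v : (↥({n} : Finset ℕ) → ℂ) => v ⟨n, Finset.mem_singleton_self n⟩)
        ∘ (fun ω (i : ↥({n} : Finset ℕ)) => ε (i:ℕ) ω) := by
      funext ω; rfl
    rw [hXeq, hεeq]
    exact h2
  -- one-step bound
  have hstep : ∀ n, ∫ ω, ‖e (n+1) ω‖^2 ∂ℙ ≤ (∫ ω, ‖e n ω‖^2 ∂ℙ) + σ^2/κ * (lam n)^2 :=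
    fun n => step_bound ℙ (k n) (hk n) (lam n) (hlam0 n) (hlam2 n) (ε n) (hL2 n) (hmean n)
      (e n) (e (n+1)) (hm2 n) (hm2 (n+1)) (hrec n) (hindE n) κ hκ (hkκ n) σ (hεσ n)
  -- value at 0
  have hE0 : ∫ ω, ‖e 0 ω‖^2 ∂ℙ = ‖fstar‖^2 := by
    rw [he0]
    simp
  -- the full bound
  have hbound : ∀ N, ∫ ω, ‖e N ω‖^2 ∂ℙ
      ≤ ‖fstar‖^2 + σ^2/κ * ∑ n ∈ Finset.range N, (lam n)^2 := by
    intro N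
    induction N with
    | zero => simp [hE0]
    | succ N ih =>
      calc ∫ ω, ‖e (N+1) ω‖^2 ∂ℙ ≤ (∫ ω, ‖e N ω‖^2 ∂ℙ) + σ^2/κ * (lam N)^2 := hstep N
      _ ≤ (‖fstar‖^2 + σ^2/κ * ∑ n ∈ Finset.range N, (lam n)^2) + σ^2/κ * (lam N)^2 := by
          linarith
      _ = ‖fstar‖^2 + σ^2/κ * ∑ n ∈ Finset.range (N+1), (lam n)^2 := by
          rw [Finset.sum_range_succ]; ring
  refine ⟨fun N _ => hbound N, fun hsum => ?_⟩
  refine ⟨‖fstar‖^2 + σ^2/κ * ∑' n, (lam n)^2, ?_⟩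
  rintro x ⟨N, rfl⟩
  refine (hbound N).trans ?_
  have h1 : ∑ n ∈ Finset.range N, (lam n)^2 ≤ ∑' n, (lam n)^2 :=
    Summable.sum_le_tsum (Finset.range N) (fun i _ => sq_nonneg _) hsum
  have h2 : (0:ℝ) ≤ σ^2/κ := by positivity
  have := mul_le_mul_of_nonneg_left h1 h2
  linarith
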